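/- Let D be self-adjoint nonnegative on a finite-dimensional real inner product space, δ > 0, α ∈ (0,1), and let w solve (tD + δI)w'(t) + αDw(t) = 0 on (0,1] with w(0) = δ^{-α} g. Then w(1) = S^{-α} g where S = D + δI; i.e., the value at pseudo-time t = 1 of the Cauchy problem solves S^α w(1) = g. -/

import Mathlib

open Real

theorem cauchy_problem_solves_fractional_equation {V : Type*} [NormedAddCommGroup V]
    [InnerProductSpace ℝ V] [FiniteDimensional ℝ V] {n : ℕ}
    (ψ : OrthonormalBasis (Fin n) ℝ V) (μ : Fin n → ℝ) (D : V →ₗ[ℝ] V)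
    (hDψ : ∀ j, D (ψ j) = μ j • ψ j) (hμ : ∀ j, 0 ≤ μ j)
    (δ α : ℝ) (hδ : 0 < δ) (hα0 : 0 < α) (hα1 : α < 1) (g : V)
    (w w' : ℝ → V)
    (hderiv : ∀ t ∈ Set.Icc (0 : ℝ) 1, HasDerivAt w (w' t) t)
    (heq : ∀ t ∈ Set.Ioc (0 : ℝ) 1,
      t • D (w' t) + δ • w' t + α • D (w t) = 0)
    (hinit : w 0 = δ ^ (-α) • g) :
    -- w(1) = S^(-α) g with S = D + δI, via the spectral calculus
    w 1 = ∑ j, ((μ j + δ) ^ (-α) * (inner ℝ g (ψ j) : ℝ)) • ψ j := by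
  classical
  -- D is "diagonal" in the basis ψ
  have hS : ∀ (j : Fin n) (v : V), (inner ℝ (ψ j) (D v) : ℝ) = μ j * inner ℝ (ψ j) v := by
    intro j v
    conv_lhs => rw [← ψ.sum_repr' v]
    rw [map_sum, inner_sum]
    have hterm : ∀ k : Fin n, (inner ℝ (ψ j) (D ((inner ℝ (ψ k) v : ℝ) • ψ k)) : ℝ)
        = if k = j then μ j * inner ℝ (ψ j) v else 0 := by
      intro k
      rw [map_smul, hDψ k, smul_smul, real_inner_smul_right,
        orthonormal_iff_ite.mp ψ.orthonormal]
      by_cases h : k = j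
      · subst h; simp [mul_comm]
      · simp [h, Ne.symm h]
    rw [Finset.sum_congr rfl (fun k _ => hterm k)]
    simp
  have key : ∀ j : Fin n,
      (inner ℝ (ψ j) (w 1) : ℝ) = (μ j + δ) ^ (-α) * inner ℝ (ψ j) g := by
    intro j
    set m := μ j with hm
    have hm0 : 0 ≤ m := hμ j
    set c : ℝ → ℝ := fun t => inner ℝ (ψ j) (w t) with hc
    set c' : ℝ → ℝ := fun t => inner ℝ (ψ j) (w' t) with hc'
    have hcderiv : ∀ t ∈ Set.Icc (0 : ℝ) 1, HasDerivAt c (c' t) t := by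
      intro t ht
      exact (innerSL ℝ (ψ j)).hasFDerivAt.comp_hasDerivAt t (hderiv t ht)
    -- scalar ODE
    have hsc : ∀ t ∈ Set.Ioc (0 : ℝ) 1, (t * m + δ) * c' t + α * m * c t = 0 := by
      intro t ht
      have h0 := heq t ht
      have h1 : (inner ℝ (ψ j) (t • D (w' t) + δ • w' t + α • D (w t)) : ℝ) = 0 := by
        rw [h0, inner_zero_right]
      rw [inner_add_right, inner_add_right, real_inner_smul_right, real_inner_smul_right,
        real_inner_smul_right, hS, hS] at h1
      simp only [hc, hc', ← hm] at h1 ⊢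
      ring_nf at h1 ⊢
      linarith
    -- positivity of the base
    have hb : ∀ t ∈ Set.Icc (0 : ℝ) 1, 0 < t * m + δ := by
      intro t ht
      have : 0 ≤ t * m := mul_nonneg ht.1 hm0
      linarith
    set φ : ℝ → ℝ := fun t => (t * m + δ) ^ α * c t with hφ
    have hφderiv : ∀ t ∈ Set.Ioo (0 : ℝ) 1, HasDerivAt φ 0 t := by
      intro t ht
      have htIcc : t ∈ Set.Icc (0 : ℝ) 1 := ⟨le_of_lt ht.1, le_of_lt ht.2⟩
      have hbt : 0 < t * m + δ := hb t htIcc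
      have h1 : HasDerivAt (fun s : ℝ => s * m + δ) m t := by
        simpa using ((hasDerivAt_id t).mul_const m).add_const δ
      have h2 : HasDerivAt (fun s : ℝ => (s * m + δ) ^ α)
          (α * (t * m + δ) ^ (α - 1) * m) t := by
        have := (Real.hasDerivAt_rpow_const (p := α) (Or.inl hbt.ne')).comp t h1
        simpa [Function.comp_def, mul_comm, mul_assoc, mul_left_comm] using this
      have h3 := h2.mul (hcderiv t htIcc)
      have e1 : (t * m + δ) ^ α = (t * m + δ) ^ (α - 1) * (t * m + δ) := by
        rw [← Real.rpow_add_one hbt.ne']; ring_nf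
      have h4 := hsc t ⟨ht.1, le_of_lt ht.2⟩
      have h0 : α * (t * m + δ) ^ (α - 1) * m * c t + (t * m + δ) ^ α * c' t = 0 := by
        rw [e1]; linear_combination (t * m + δ) ^ (α - 1) * h4
      simpa [h0, hφ, Pi.mul_def] using h3
    have hccont : ContinuousOn c (Set.Icc 0 1) := fun t ht =>
      (hcderiv t ht).continuousAt.continuousWithinAt
    have hφcont : ContinuousOn φ (Set.Icc 0 1) := by
      apply ContinuousOn.mul _ hccont
      apply ContinuousOn.rpow_const
      · exact ((continuous_id.mul continuous_const).add continuous_const).continuousOn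
      · intro t ht; exact Or.inl (hb t ht).ne'
    have hφdiff : DifferentiableOn ℝ φ (interior (Set.Icc (0:ℝ) 1)) := by
      rw [interior_Icc]
      exact fun t ht => (hφderiv t ht).differentiableAt.differentiableWithinAt
    have hmono : MonotoneOn φ (Set.Icc 0 1) := by
      apply monotoneOn_of_deriv_nonneg (convex_Icc 0 1) hφcont hφdiff
      intro t ht
      rw [interior_Icc] at ht
      rw [(hφderiv t ht).deriv]
    have hanti : AntitoneOn φ (Set.Icc 0 1) := by
      apply antitoneOn_of_deriv_nonpos (convex_Icc 0 1) hφcont hφdiff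
      intro t ht
      rw [interior_Icc] at ht
      rw [(hφderiv t ht).deriv]
    have h01 : (0:ℝ) ∈ Set.Icc (0:ℝ) 1 := ⟨le_refl 0, zero_le_one⟩
    have h11 : (1:ℝ) ∈ Set.Icc (0:ℝ) 1 := ⟨zero_le_one, le_refl 1⟩
    have hφeq : φ 1 = φ 0 :=
      le_antisymm (hanti h01 h11 zero_le_one) (hmono h01 h11 zero_le_one)
    have hφ0 : φ 0 = inner ℝ (ψ j) g := by
      simp only [hφ, hc, hinit, real_inner_smul_right, zero_mul, zero_add]
      rw [← mul_assoc, ← Real.rpow_add hδ]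
      simp
    have hφ1 : φ 1 = (m + δ) ^ α * c 1 := by simp [hφ]
    have hbig : 0 < m + δ := by linarith
    have : (m + δ) ^ α * c 1 = inner ℝ (ψ j) g := by rw [← hφ1, hφeq, hφ0]
    have hc1 : c 1 = (m + δ) ^ (-α) * inner ℝ (ψ j) g := by
      rw [← this, Real.rpow_neg hbig.le, ← mul_assoc,
        inv_mul_cancel₀ (Real.rpow_pos_of_pos hbig α).ne', one_mul]
    exact hc1
  conv_lhs => rw [← ψ.sum_repr' (w 1)]
  refine Finset.sum_congr rfl fun j _ => ?_
  rw [key j, real_inner_comm (ψ j) g]
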